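/- Let Γ be a finite simple graph and Δ a full subgraph. The normalizer of the special subgroup A_Δ in A_Γ equals A_{st(Δ)}, where st(Δ) is the full subgraph spanned by Δ together with the vertices adjacent to every vertex of Δ. -/

import Mathlib

/-! Basic definitions: right-angled Artin groups, special subgroups,
relative automorphism notions, and graph-theoretic notions from
Day–Wade, "Relative automorphism groups of right-angled Artin groups". -/

namespace RAAGPaper

variable {V : Type}

open scoped commutatorElement

/-- The commutator relations defining the RAAG on a simple graph. -/
def raagRels (G : SimpleGraph V) : Set (FreeGroup V) :=
  {r | ∃ v w : V, G.Adj v w ∧ r = ⁅FreeGroup.of v, FreeGroup.of w⁆}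

/-- The right-angled Artin group on the graph `G`. -/
abbrev RAAG (G : SimpleGraph V) : Type := PresentedGroup (raagRels G)

/-- The generator of `RAAG G` corresponding to a vertex. -/
def gen (G : SimpleGraph V) (v : V) : RAAG G := PresentedGroup.of v

/-- The special subgroup `A_Δ` generated by the vertices of a (full) subgraph `Δ`. -/
def sp (G : SimpleGraph V) (Δ : Set V) : Subgroup (RAAG G) :=
  Subgroup.closure (gen G '' Δ)

/-- The link of a vertex. -/
def lk (G : SimpleGraph V) (v : V) : Set V := {w | G.Adj v w}

/-- The star of a vertex. -/
def st (G : SimpleGraph V) (v : V) : Set V := insert v (lk G v)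

/-- The standard (domination) order: `u ≤ v` iff `lk(u) ⊆ st(v)`. -/
def stdLE (G : SimpleGraph V) (u v : V) : Prop := lk G u ⊆ st G v

/-- An automorphism acts trivially on a subgroup if it agrees with an inner
automorphism on that subgroup. -/
def ActsTrivially {A : Type*} [Group A] (φ : MulAut A) (H : Subgroup A) : Prop :=
  ∃ g : A, ∀ h ∈ H, φ h = g * h * g⁻¹

/-- An automorphism preserves a subgroup if it sends it to a conjugate of itself. -/
def Preserves {A : Type*} [Group A] (φ : MulAut A) (H : Subgroup A) : Prop :=
  ∃ g : A, Subgroup.map φ.toMonoidHom H = Subgroup.map (MulAut.conj g).toMonoidHom H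

/-- `𝒢`-adjacency: adjacent in `G` or contained in a common member of `𝒢`. -/
def gAdj (G : SimpleGraph V) (calG : Set (Set V)) (u w : V) : Prop :=
  G.Adj u w ∨ ∃ Δ ∈ calG, u ∈ Δ ∧ w ∈ Δ

/-- `𝒢`-reachability within a set `S` of vertices. -/
def gReach (G : SimpleGraph V) (calG : Set (Set V)) (S : Set V) : V → V → Prop :=
  Relation.ReflTransGen (fun a b => a ∈ S ∧ b ∈ S ∧ gAdj G calG a b)

/-- `K` is a union of `𝒢`-components of (the full subgraph on) `S`.
With `calG = ∅` this says `K` is a union of connected components of `S`. -/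
def UnionOfComps (G : SimpleGraph V) (calG : Set (Set V)) (S K : Set V) : Prop :=
  K ⊆ S ∧ ∀ u ∈ K, ∀ w, gReach G calG S u w → w ∈ K

/-- The members of `𝒢` not containing the vertex `x`. -/
def calGx (calG : Set (Set V)) (x : V) : Set (Set V) := {Δ ∈ calG | x ∉ Δ}

/-- The `𝒢`-order: `u ≤_𝒢 v` iff `u ≤ v` in the standard order and every member of
`𝒢` containing `u` also contains `v`. -/
def gLE (G : SimpleGraph V) (calG : Set (Set V)) (u v : V) : Prop :=
  stdLE G u v ∧ ∀ Δ ∈ calG, u ∈ Δ → v ∈ Δ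

/-- `Δ` meets at most one `𝒢^x`-component of `Γ - st(x)`. -/
def MeetsAtMostOne (G : SimpleGraph V) (calG : Set (Set V)) (x : V) (Δ : Set V) : Prop :=
  ∀ u w, u ∈ Δ → w ∈ Δ → u ∈ (st G x)ᶜ → w ∈ (st G x)ᶜ →
    gReach G (calGx calG x) ((st G x)ᶜ) u w

/-- `Δ` is upwards closed under the `𝒢`-order. -/
def UpClosed (G : SimpleGraph V) (calG : Set (Set V)) (Δ : Set V) : Prop :=
  ∀ v ∈ Δ, ∀ w, gLE G calG v w → w ∈ Δ

/-- `Δ` is not `𝒢`-star-separated by any outside vertex. -/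
def NotStarSep (G : SimpleGraph V) (calG : Set (Set V)) (Δ : Set V) : Prop :=
  ∀ x, x ∉ Δ → MeetsAtMostOne G calG x Δ

/-- All members of `calG` are proper (special) subgroups. -/
def Proper (calG : Set (Set V)) : Prop := ∀ Δ ∈ calG, Δ ≠ Set.univ

/-- Word length of an element of the RAAG with respect to the standard generators. -/
noncomputable def wordLength (G : SimpleGraph V) (g : RAAG G) : ℕ :=
  sInf {n | ∃ l : List (V × Bool), PresentedGroup.mk (raagRels G) (FreeGroup.mk l) = g ∧
    l.length = n}

/-- An element is cyclically reduced if it has minimal word length in its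
conjugacy class. -/
noncomputable def CycRed (G : SimpleGraph V) (g : RAAG G) : Prop :=
  ∀ h : RAAG G, wordLength G g ≤ wordLength G (h * g * h⁻¹)

/-- The link of `v` computed inside the full subgraph `Δ`. -/
def lkIn (G : SimpleGraph V) (Δ : Set V) (v : V) : Set V := {w ∈ Δ | G.Adj v w}

/-- The star of `v` computed inside the full subgraph `Δ`. -/
def stIn (G : SimpleGraph V) (Δ : Set V) (v : V) : Set V := insert v (lkIn G Δ v)

/-- Domination computed inside the full subgraph `Δ`. -/
def leIn (G : SimpleGraph V) (Δ : Set V) (u v : V) : Prop :=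
  lkIn G Δ u ⊆ stIn G Δ v

/-- The induced peripheral structure `𝒢_Δ`: proper intersections of members of `𝒢`
with `Δ`. -/
def inducedG (calG : Set (Set V)) (Δ : Set V) : Set (Set V) :=
  {Θ | ∃ Λ ∈ calG, Θ = Δ ∩ Λ ∧ Δ ∩ Λ ≠ Δ}

/-- `𝒢` is saturated: it contains every proper special subgroup invariant under
`Out⁰(A_Γ; 𝒢)`, where invariance is characterized by being upwards closed under
`≤_𝒢` and not `𝒢`-star-separated by an outside vertex. -/
def Saturated (G : SimpleGraph V) (calG : Set (Set V)) : Prop :=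
  ∀ Δ : Set V, Δ ≠ Set.univ → UpClosed G calG Δ → NotStarSep G calG Δ → Δ ∈ calG

/-- `φ` is an inversion automorphism. -/
def IsInversion (G : SimpleGraph V) (φ : MulAut (RAAG G)) : Prop :=
  ∃ v, φ (gen G v) = (gen G v)⁻¹ ∧ ∀ w, w ≠ v → φ (gen G w) = gen G w

/-- `φ` is a transvection. -/
def IsTransvection (G : SimpleGraph V) (φ : MulAut (RAAG G)) : Prop :=
  ∃ v w, v ≠ w ∧ stdLE G v w ∧ φ (gen G v) = gen G v * gen G w ∧
    ∀ u, u ≠ v → φ (gen G u) = gen G u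

/-- `φ` is an extended partial conjugation. -/
def IsEPC (G : SimpleGraph V) (φ : MulAut (RAAG G)) : Prop :=
  ∃ x K, UnionOfComps G ∅ ((st G x)ᶜ) K ∧
    (∀ w ∈ K, φ (gen G w) = gen G x * gen G w * (gen G x)⁻¹) ∧
    ∀ w ∉ K, φ (gen G w) = gen G w

/-- The subgroup `Aut⁰(A_Γ)` generated by inversions, transvections and extended
partial conjugations. -/
def Aut0 (G : SimpleGraph V) : Subgroup (MulAut (RAAG G)) :=
  Subgroup.closure {φ | IsInversion G φ ∨ IsTransvection G φ ∨ IsEPC G φ}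


open Monoid Monoid.PushoutI Monoid.PushoutI.NormalWord Function

namespace RAAGAux

variable {ι : Type*} {G : ι → Type*} {H : Type*} [∀ i, Group (G i)] [Group H] {φ : ∀ i, H →* G i}

/-- product of a list of letters in the pushout -/
def listProd (φ : ∀ i, H →* G i) (l : List (Σ i, G i)) : PushoutI φ :=
  (l.map fun p => of (φ := φ) p.1 p.2).prod

@[simp] theorem listProd_nil : listProd φ [] = 1 := rfl

theorem listProd_append (l₁ l₂ : List (Σ i, G i)) :
    listProd φ (l₁ ++ l₂) = listProd φ l₁ * listProd φ l₂ := by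
  simp [listProd]

@[simp] theorem listProd_singleton {i : ι} (g : G i) :
    listProd φ [⟨i, g⟩] = of (φ := φ) i g := by
  simp [listProd]

theorem listProd_cons {i : ι} (g : G i) (l : List (Σ i, G i)) :
    listProd φ (⟨i, g⟩ :: l) = of (φ := φ) i g * listProd φ l := by
  simp [listProd]

theorem ofCoprodI_word_prod (w : CoprodI.Word G) :
    ofCoprodI (w.prod) = listProd φ w.toList := by
  rw [CoprodI.Word.prod, map_list_prod, listProd, List.map_map]
  rfl

theorem listProd_reverse_inv (l : List (Σ i, G i)) :
    listProd φ (l.reverse.map fun p => ⟨p.1, p.2⁻¹⟩) = (listProd φ l)⁻¹ := by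
  induction l with
  | nil => simp
  | cons p t ih =>
    rcases p with ⟨i, g⟩
    rw [List.reverse_cons, List.map_append, listProd_append, ih, listProd_cons]
    simp

/-- Build a `CoprodI.Word` from a list whose letters avoid the base group. -/
def wordOf (φ : ∀ i, H →* G i) (l : List (Σ i, G i))
    (hred : ∀ p ∈ l, p.2 ∉ (φ p.1).range)
    (hch : (l.map Sigma.fst).Chain' (· ≠ ·)) : CoprodI.Word G where
  toList := l
  ne_one := fun p hp h1 => hred p hp (h1 ▸ one_mem _)
  chain_ne := (List.isChain_map _).1 hch

@[simp] theorem wordOf_toList (l : List (Σ i, G i)) (h1) (h2) :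
    (wordOf φ l h1 h2).toList = l := rfl

theorem wordOf_reduced (l : List (Σ i, G i)) (hred : ∀ p ∈ l, p.2 ∉ (φ p.1).range)
    (hch : (l.map Sigma.fst).Chain' (· ≠ ·)) :
    Reduced φ (wordOf φ l hred hch) := fun p hp => hred p hp

/-- L1 : a reduced word whose product lies in `(of i).range` has index list `[]` or `[i]`. -/
theorem indices_of_reduced_mem_range (hφ : ∀ i, Injective (φ i)) {w : CoprodI.Word G}
    (hw : Reduced φ w) {i : ι} (h : ofCoprodI w.prod ∈ (of (φ := φ) i).range) :
    w.toList.map Sigma.fst = [] ∨ w.toList.map Sigma.fst = [i] := by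
  obtain ⟨a, ha⟩ := h
  by_cases har : a ∈ (φ i).range
  · left
    obtain ⟨c, rfl⟩ := har
    have hbase : ofCoprodI w.prod ∈ (base φ).range := by
      rw [← ha, of_apply_eq_base φ i c]
      exact ⟨c, rfl⟩
    have := hw.eq_empty_of_mem_range hφ hbase
    rw [this]
    rfl
  · right
    have ha1 : a ≠ 1 := fun h1 => har (h1 ▸ one_mem _)
    rcases transversal_nonempty φ hφ with ⟨d⟩
    obtain ⟨n1, hn1p, hn1m⟩ := hw.exists_normalWord_prod_eq d
    have hw' : Reduced φ (wordOf φ [⟨i, a⟩] (by simpa using har) (List.isChain_singleton _)) :=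
      wordOf_reduced _ _ _
    obtain ⟨n2, hn2p, hn2m⟩ := hw'.exists_normalWord_prod_eq d
    have hprod2 : ofCoprodI (CoprodI.Word.prod (wordOf φ [⟨i, a⟩] (by simpa using har) (List.isChain_singleton _)))
        = of (φ := φ) i a := by
      rw [ofCoprodI_word_prod]
      exact listProd_singleton a
    have : n1 = n2 := by
      apply prod_injective
      rw [hn1p, hn2p, hprod2]
      exact ha.symm
    rw [← hn1m, this, hn2m]
    rfl


theorem map_fst_reverse_inv (l : List (Σ i, G i)) :
    (l.reverse.map fun p => (⟨p.1, p.2⁻¹⟩ : Σ i, G i)).map Sigma.fst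
      = (l.map Sigma.fst).reverse := by
  rw [List.map_map, List.map_reverse]
  rfl

theorem listProd_mem_range_of_conj (hφ : ∀ i, Injective (φ i)) {i : ι}
    (l : List (Σ j, G j)) :
    ∀ a : G i, (∀ u : G i, u * a * u⁻¹ ∉ (φ i).range) →
    ((l.map Sigma.fst).Chain' (· ≠ ·)) → (∀ p ∈ l, p.2 ∉ (φ p.1).range) →
    listProd φ l * of (φ := φ) i a * (listProd φ l)⁻¹ ∈ (of (φ := φ) i).range →
    listProd φ l ∈ (of (φ := φ) i).range := by
  induction l using List.reverseRecOn with
  | nil => intro a ha hch hred hmem; exact ⟨1, map_one _⟩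
  | append_singleton l' p ih =>
    intro a ha hch hred hmem
    rcases p with ⟨j, g⟩
    rw [List.map_append] at hch
    rcases List.isChain_append.1 hch with ⟨hch', -, hlast⟩
    have hred' : ∀ p ∈ l', p.2 ∉ (φ p.1).range := fun p hp =>
      hred p (List.mem_append_left _ hp)
    have hg : g ∉ (φ j).range := by
      simpa using hred ⟨j, g⟩ (List.mem_append_right _ (List.mem_singleton_self _))
    have har : a ∉ (φ i).range := by simpa using ha 1
    rw [listProd_append, listProd_singleton] at hmem ⊢
    have hrw : listProd φ l' * of (φ := φ) j g * of (φ := φ) i a *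
        (listProd φ l' * of (φ := φ) j g)⁻¹ =
        listProd φ l' * (of (φ := φ) j g * of (φ := φ) i a * (of (φ := φ) j g)⁻¹) *
          (listProd φ l')⁻¹ := by
      group
    rw [hrw] at hmem
    by_cases hij : j = i
    · subst hij
      rw [← map_inv, ← map_mul, ← map_mul] at hmem
      have ha' : ∀ u : G j, u * (g * a * g⁻¹) * u⁻¹ ∉ (φ j).range := by
        intro u hu
        apply ha (u * g)
        have : u * g * a * (u * g)⁻¹ = u * (g * a * g⁻¹) * u⁻¹ := by group
        rw [this]
        exact hu
      have hmain := ih (g * a * g⁻¹) ha' hch' hred' hmem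
      have hword := indices_of_reduced_mem_range hφ (wordOf_reduced l' hred' hch')
        (i := j) (by rwa [ofCoprodI_word_prod])
      change l'.map Sigma.fst = [] ∨ l'.map Sigma.fst = [j] at hword
      rcases hword with hword | hword
      · have : l' = [] := List.map_eq_nil_iff.1 hword
        subst this
        simpa using ⟨g, rfl⟩
      · exfalso
        have hlst : (l'.map Sigma.fst).getLast? = some j := by rw [hword]; rfl
        exact hlast j (by rw [hlst]; rfl) j (by rfl) rfl
    · exfalso
      set linv : List (Σ j, G j) := l'.reverse.map fun p => ⟨p.1, p.2⁻¹⟩ with hlinv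
      set L : List (Σ j, G j) := l' ++ ([⟨j, g⟩, ⟨i, a⟩, ⟨j, g⁻¹⟩] ++ linv) with hL
      have hmfst : L.map Sigma.fst =
          (l'.map Sigma.fst) ++ ([j, i, j] ++ (l'.map Sigma.fst).reverse) := by
        rw [hL, List.map_append, List.map_append, map_fst_reverse_inv]
        rfl
      have hredL : ∀ p ∈ L, p.2 ∉ (φ p.1).range := by
        intro p hp
        rw [hL] at hp
        rcases List.mem_append.1 hp with hp | hp
        · exact hred' p hp
        rcases List.mem_append.1 hp with hp | hp
        · rcases List.mem_cons.1 hp with rfl | hp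
          · exact hg
          rcases List.mem_cons.1 hp with rfl | hp
          · exact har
          rcases List.mem_cons.1 hp with rfl | hp
          · simpa using hg
          · simp at hp
        · rw [hlinv] at hp
          rcases List.mem_map.1 hp with ⟨q, hq, rfl⟩
          simpa using hred' q (List.mem_reverse.1 hq)
      have hchL : (L.map Sigma.fst).Chain' (· ≠ ·) := by
        rw [hmfst]
        refine List.isChain_append.2 ⟨hch', List.isChain_append.2
          ⟨?_, ?_, ?_⟩, ?_⟩
        · exact List.isChain_cons_cons.2 ⟨hij, List.isChain_cons_cons.2 ⟨Ne.symm hij, List.isChain_singleton _⟩⟩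
        · rw [List.isChain_reverse]
          exact hch'.imp fun a b h => Ne.symm h
        · intro x hx y hy
          simp only [List.getLast?_cons_cons, List.getLast?_singleton, Option.mem_def,
            Option.some.injEq] at hx
          subst hx
          rw [List.head?_reverse] at hy
          exact Ne.symm (hlast y hy j rfl)
        · intro x hx y hy
          have hyj : y = j := by
            rw [List.cons_append, List.head?_cons, Option.mem_def, Option.some.injEq] at hy
            exact hy.symm
          exact hlast x hx y (by rw [hyj]; rfl)
      have hprodL : listProd φ L = listProd φ l' *
          (of (φ := φ) j g * of (φ := φ) i a * (of (φ := φ) j g)⁻¹) * (listProd φ l')⁻¹ := by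
        rw [hL, listProd_append, listProd_append, hlinv, listProd_reverse_inv,
          listProd_cons, listProd_cons, listProd_singleton, map_inv]
        group
      have hmemL : ofCoprodI (wordOf φ L hredL hchL).prod ∈ (of (φ := φ) i).range := by
        rw [ofCoprodI_word_prod]
        show listProd φ L ∈ _
        rw [hprodL]
        exact hmem
      have hword := indices_of_reduced_mem_range hφ (wordOf_reduced L hredL hchL) hmemL
      have hlen : (List.map Sigma.fst (wordOf φ L hredL hchL).toList).length
          = 2 * (l'.map Sigma.fst).length + 3 := by
        show (L.map Sigma.fst).length = _
        rw [hmfst]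
        simp
        omega
      rcases hword with hword | hword <;> rw [hword] at hlen <;> simp at hlen

/-- The centralizer-style lemma: if `h (of i a) h⁻¹ ∈ (of i).range` and `a` is not
conjugate into the base inside `G i`, then `h ∈ (of i).range`. -/
theorem mem_range_of_conj_mem (hφ : ∀ i, Injective (φ i)) {i : ι} {a : G i}
    (ha : ∀ u : G i, u * a * u⁻¹ ∉ (φ i).range) (h : PushoutI φ)
    (hc : h * of (φ := φ) i a * h⁻¹ ∈ (of (φ := φ) i).range) :
    h ∈ (of (φ := φ) i).range := by
  classical
  rcases transversal_nonempty φ hφ with ⟨d⟩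
  set n := (equiv (d := d)) h with hn
  have hh : h = base φ n.head * listProd φ n.toList := by
    have : h = n.prod := ((equiv (d := d)).symm_apply_apply h).symm
    rw [this]
    rw [NormalWord.prod, ofCoprodI_word_prod]
  have hbase : base φ n.head ∈ (of (φ := φ) i).range := by
    rw [← of_apply_eq_base φ i n.head]
    exact ⟨_, rfl⟩
  have hred : ∀ p ∈ n.toList, p.2 ∉ (φ p.1).range := by
    intro p hp hr
    have h1 : p.2 ≠ 1 := n.ne_one p hp
    have hset : p.2 ∈ d.set p.1 := n.normalized p.1 p.2 hp
    apply h1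
    have hinj := (d.compl p.1).injective
    have hpair : ((⟨⟨p.2, hr⟩, ⟨1, d.one_mem p.1⟩⟩ :
        ((φ p.1).range : Set (G p.1)) × d.set p.1)) = ⟨⟨1, one_mem _⟩, ⟨p.2, hset⟩⟩ :=
      hinj (by simp)
    have := congrArg (fun x => (x.1 : G p.1)) hpair
    simpa using this
  have hch : (n.toList.map Sigma.fst).Chain' (· ≠ ·) :=
    (List.isChain_map _).2 n.chain_ne
  have hc' : listProd φ n.toList * of (φ := φ) i a * (listProd φ n.toList)⁻¹ ∈
      (of (φ := φ) i).range := by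
    obtain ⟨c, hcb⟩ := hbase
    obtain ⟨x, hx⟩ := hc
    rw [hh] at hx
    refine ⟨c⁻¹ * x * c, ?_⟩
    rw [map_mul, map_mul, map_inv, hcb, hx]
    group
  have := listProd_mem_range_of_conj hφ n.toList a ha hch hred hc'
  rw [hh]
  exact mul_mem hbase this

end RAAGAux

section Aux

open Monoid Function
open scoped Classical

variable {G : SimpleGraph V}

theorem gen_commute_of_adj {v w : V} (h : G.Adj v w) : Commute (gen G v) (gen G w) := by
  have hmem : (⁅FreeGroup.of v, FreeGroup.of w⁆ : FreeGroup V) ∈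
      Subgroup.normalClosure (raagRels G) :=
    Subgroup.subset_normalClosure ⟨v, w, h, rfl⟩
  have h1 : (⁅gen G v, gen G w⁆ : RAAG G) = 1 := by
    show ⁅PresentedGroup.mk (raagRels G) (FreeGroup.of v),
      PresentedGroup.mk (raagRels G) (FreeGroup.of w)⁆ = 1
    rw [← map_commutatorElement]
    exact (QuotientGroup.eq_one_iff _).2 hmem
  exact commutatorElement_eq_one_iff_commute.1 h1

/-- Build a homomorphism out of a RAAG from a vertex map with commuting images. -/
noncomputable def mkHom {K : Type*} [Group K] (f : V → K)
    (hf : ∀ v w, G.Adj v w → Commute (f v) (f w)) : RAAG G →* K :=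
  PresentedGroup.toGroup (f := f) (by
    rintro r ⟨v, w, hadj, rfl⟩
    rw [map_commutatorElement, FreeGroup.lift_apply_of, FreeGroup.lift_apply_of]
    exact commutatorElement_eq_one_iff_commute.2 (hf v w hadj))

@[simp] theorem mkHom_gen {K : Type*} [Group K] (f : V → K)
    (hf : ∀ v w, G.Adj v w → Commute (f v) (f w)) (v : V) :
    mkHom f hf (gen G v) = f v :=
  PresentedGroup.toGroup.of _

theorem raag_hom_ext {K : Type*} [Group K] {f g : RAAG G →* K}
    (h : ∀ v, f (gen G v) = g (gen G v)) : f = g :=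
  PresentedGroup.ext h

theorem sp_mono {S T : Set V} (h : S ⊆ T) : sp G S ≤ sp G T :=
  Subgroup.closure_mono (Set.image_mono h)

theorem sp_univ : sp G Set.univ = (⊤ : Subgroup (RAAG G)) := by
  have : gen G '' Set.univ = Set.range (PresentedGroup.of (rels := raagRels G)) := by
    rw [Set.image_univ]; rfl
  rw [sp, this, PresentedGroup.closure_range_of]

theorem gen_mem_sp {S : Set V} {v : V} (hv : v ∈ S) : gen G v ∈ sp G S :=
  Subgroup.subset_closure ⟨v, hv, rfl⟩

/-- The retraction onto a special subgroup. -/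
noncomputable def retr (G : SimpleGraph V) (S : Set V) : RAAG G →* RAAG G :=
  mkHom (fun v => if v ∈ S then gen G v else 1) (by
    intro v w hadj
    by_cases hv : v ∈ S <;> by_cases hw : w ∈ S <;> simp only [if_pos, if_neg, hv, hw,
      if_true, if_false] <;>
      first
        | exact Commute.one_left _
        | exact Commute.one_right _
        | exact gen_commute_of_adj hadj)

theorem retr_gen_mem {S : Set V} {v : V} (hv : v ∈ S) : retr G S (gen G v) = gen G v := by
  rw [retr, mkHom_gen, if_pos hv]

theorem retr_gen_not_mem {S : Set V} {v : V} (hv : v ∉ S) : retr G S (gen G v) = 1 := by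
  rw [retr, mkHom_gen, if_neg hv]

theorem retr_mem (G : SimpleGraph V) (S : Set V) (g : RAAG G) : retr G S g ∈ sp G S := by
  refine PresentedGroup.generated_by (raagRels G) ((sp G S).comap (retr G S)) (fun j => ?_) g
  rw [Subgroup.mem_comap]
  show retr G S (gen G j) ∈ sp G S
  by_cases hj : j ∈ S
  · rw [retr_gen_mem hj]; exact gen_mem_sp hj
  · rw [retr_gen_not_mem hj]; exact one_mem _

theorem retr_fix {S : Set V} {g : RAAG G} (hg : g ∈ sp G S) : retr G S g = g := by
  induction hg using Subgroup.closure_induction with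
  | mem x hx =>
    rcases hx with ⟨v, hv, rfl⟩
    exact retr_gen_mem hv
  | one => exact map_one _
  | mul x y hx hy ihx ihy => rw [map_mul, ihx, ihy]
  | inv x hx ih => rw [map_inv, ih]

theorem mem_sp_iff {S : Set V} {g : RAAG G} : g ∈ sp G S ↔ retr G S g = g :=
  ⟨retr_fix, fun h => h ▸ retr_mem G S g⟩

theorem retr_comp (S T : Set V) :
    (retr G S).comp (retr G T) = retr G (S ∩ T) := by
  apply raag_hom_ext
  intro v
  by_cases hT : v ∈ T
  · by_cases hS : v ∈ S
    · rw [MonoidHom.comp_apply, retr_gen_mem hT, retr_gen_mem hS,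
        retr_gen_mem (Set.mem_inter hS hT)]
    · rw [MonoidHom.comp_apply, retr_gen_mem hT, retr_gen_not_mem hS,
        retr_gen_not_mem (fun h => hS h.1)]
  · rw [MonoidHom.comp_apply, retr_gen_not_mem hT, map_one,
      retr_gen_not_mem (fun h => hT h.2)]

theorem sp_inter {S T : Set V} {g : RAAG G} (hS : g ∈ sp G S) (hT : g ∈ sp G T) :
    g ∈ sp G (S ∩ T) := by
  rw [mem_sp_iff]
  have := congrArg (fun φ : RAAG G →* RAAG G => φ g) (retr_comp (G := G) S T)
  simp only [MonoidHom.comp_apply] at this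
  rw [← this, retr_fix hT, retr_fix hS]

theorem mem_sp_biInter {g : RAAG G} (F : Finset V) (f : V → Set V) (hne : F.Nonempty)
    (hf : ∀ v ∈ F, g ∈ sp G (f v)) : g ∈ sp G (⋂ v ∈ F, f v) := by
  classical
  induction F using Finset.cons_induction with
  | empty => exact absurd hne (by simp)
  | cons a F ha ih =>
    rcases F.eq_empty_or_nonempty with rfl | hFne
    · simpa using hf a (by simp)
    · have h1 := hf a (Finset.mem_cons_self _ _)
      have h2 := ih hFne (fun v hv => hf v (Finset.mem_cons_of_mem hv))
      have h3 := sp_inter h1 h2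
      have h4 : (⋂ v ∈ (Finset.cons a F ha), f v) = f a ∩ ⋂ v ∈ F, f v := by
        simp [Finset.cons_eq_insert]
      rw [h4]
      exact h3


/-- The RAAG of the induced subgraph on `S`. -/
abbrev IndRAAG (G : SimpleGraph V) (S : Set V) : Type :=
  RAAG (G.comap (Subtype.val : S → V))

/-- Inclusion of the RAAG of an induced subgraph. -/
noncomputable def inclHom (G : SimpleGraph V) (S : Set V) : IndRAAG G S →* RAAG G :=
  mkHom (fun u => gen G u.val) (fun _ _ hadj => gen_commute_of_adj hadj)

@[simp] theorem inclHom_gen (S : Set V) (u : S) :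
    inclHom G S (gen _ u) = gen G u.val :=
  mkHom_gen _ _ _

/-- Inclusions between RAAGs of induced subgraphs. -/
noncomputable def subHom (G : SimpleGraph V) {S T : Set V} (hST : S ⊆ T) :
    IndRAAG G S →* IndRAAG G T :=
  mkHom (fun u => gen _ ⟨u.val, hST u.2⟩) (fun _ _ hadj => gen_commute_of_adj hadj)

@[simp] theorem subHom_gen {S T : Set V} (hST : S ⊆ T) (u : S) :
    subHom G hST (gen _ u) = gen _ ⟨u.val, hST u.2⟩ :=
  mkHom_gen _ _ _

/-- Restriction map between RAAGs of induced subgraphs. -/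
noncomputable def subRest (G : SimpleGraph V) (S T : Set V) :
    IndRAAG G T →* IndRAAG G S :=
  mkHom (fun u => if h : u.val ∈ S then gen _ ⟨u.val, h⟩ else 1) (by
    intro u w hadj
    by_cases hu : u.val ∈ S <;> by_cases hw : w.val ∈ S <;> simp only [dif_pos, dif_neg,
      hu, hw] <;>
      first
        | exact Commute.one_left _
        | exact Commute.one_right _
        | exact gen_commute_of_adj hadj)

theorem subRest_comp_subHom {S T : Set V} (hST : S ⊆ T) :
    (subRest G S T).comp (subHom G hST) = MonoidHom.id _ := by
  apply raag_hom_ext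
  intro u
  rw [MonoidHom.comp_apply, subHom_gen, MonoidHom.id_apply, subRest, mkHom_gen, dif_pos u.2]

theorem subHom_injective {S T : Set V} (hST : S ⊆ T) : Injective (subHom G hST) := by
  have h := subRest_comp_subHom (G := G) hST
  intro a b hab
  have := congrArg (subRest G S T) hab
  calc a = (subRest G S T).comp (subHom G hST) a := by rw [h]; rfl
  _ = (subRest G S T).comp (subHom G hST) b := this
  _ = b := by rw [h]; rfl

/-- Restriction from the full RAAG to an induced subgraph RAAG. -/
noncomputable def restHom (G : SimpleGraph V) (S : Set V) : RAAG G →* IndRAAG G S :=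
  mkHom (fun v => if h : v ∈ S then gen _ ⟨v, h⟩ else 1) (by
    intro u w hadj
    by_cases hu : u ∈ S <;> by_cases hw : w ∈ S <;> simp only [dif_pos, dif_neg, hu, hw] <;>
      first
        | exact Commute.one_left _
        | exact Commute.one_right _
        | exact gen_commute_of_adj hadj)

theorem restHom_comp_inclHom (S : Set V) :
    (restHom G S).comp (inclHom G S) = MonoidHom.id _ := by
  apply raag_hom_ext
  intro u
  rw [MonoidHom.comp_apply, inclHom_gen, MonoidHom.id_apply, restHom, mkHom_gen, dif_pos u.2]

theorem inclHom_injective (S : Set V) : Injective (inclHom G S) := by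
  intro a b hab
  have h1 := congrArg (restHom G S) hab
  rw [← MonoidHom.comp_apply, ← MonoidHom.comp_apply, restHom_comp_inclHom] at h1
  exact h1

theorem inclHom_range (S : Set V) : (inclHom G S).range = sp G S := by
  rw [MonoidHom.range_eq_map, ← PresentedGroup.closure_range_of
    (raagRels (G.comap (Subtype.val : S → V))), MonoidHom.map_closure]
  unfold sp
  congr 1
  ext y
  constructor
  · rintro ⟨_, ⟨u, rfl⟩, rfl⟩
    exact ⟨u.val, u.2, (inclHom_gen S u).symm⟩
  · rintro ⟨w, hw, rfl⟩
    exact ⟨PresentedGroup.of (⟨w, hw⟩ : S), ⟨⟨w, hw⟩, rfl⟩, inclHom_gen S ⟨w, hw⟩⟩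

theorem inclHom_map_sp (S : Set V) (T : Set (S : Set V)) :
    Subgroup.map (inclHom G S) (sp _ T) = sp G (Subtype.val '' T) := by
  rw [sp, MonoidHom.map_closure]
  unfold sp
  congr 1
  ext y
  constructor
  · rintro ⟨_, ⟨u, hu, rfl⟩, rfl⟩
    exact ⟨u.val, ⟨u, hu, rfl⟩, (inclHom_gen S u).symm⟩
  · rintro ⟨_, ⟨u, hu, rfl⟩, rfl⟩
    exact ⟨gen _ u, ⟨u, hu, rfl⟩, inclHom_gen S u⟩


section Amalgam

open Monoid.PushoutI

variable (G : SimpleGraph V) (x : V)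

theorem lk_subset_ne : lk G x ⊆ {w | w ≠ x} := fun _ hw => hw.ne'

theorem lk_subset_st : lk G x ⊆ st G x := Set.subset_insert _ _

/-- The two factor groups of the amalgam decomposition of a RAAG at a vertex `x`. -/
noncomputable def amalG : Bool → Type
  | true => IndRAAG G {w | w ≠ x}
  | false => IndRAAG G (st G x)

noncomputable instance amalGGroup : ∀ b : Bool, Group (amalG G x b)
  | true => inferInstanceAs (Group (IndRAAG G {w | w ≠ x}))
  | false => inferInstanceAs (Group (IndRAAG G (st G x)))

/-- The base inclusion maps of the amalgam. -/
noncomputable def amalPhi : ∀ b : Bool, IndRAAG G (lk G x) →* amalG G x b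
  | true => subHom G (lk_subset_ne G x)
  | false => subHom G (lk_subset_st G x)

theorem amalPhi_injective : ∀ b, Injective (amalPhi G x b)
  | true => subHom_injective (lk_subset_ne G x)
  | false => subHom_injective (lk_subset_st G x)

/-- The inclusions of the two factors into the full RAAG. -/
noncomputable def amalInc : ∀ b : Bool, amalG G x b →* RAAG G
  | true => inclHom G {w | w ≠ x}
  | false => inclHom G (st G x)

/-- The map from the amalgam to the RAAG. -/
noncomputable def amalPsi : Monoid.PushoutI (amalPhi G x) →* RAAG G :=
  Monoid.PushoutI.lift (amalInc G x) (inclHom G (lk G x)) (by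
    intro b
    cases b
    · apply raag_hom_ext
      intro u
      rw [MonoidHom.comp_apply]
      show inclHom G (st G x) (subHom G (lk_subset_st G x) (gen _ u)) =
        inclHom G (lk G x) (gen _ u)
      rw [subHom_gen, inclHom_gen, inclHom_gen]
    · apply raag_hom_ext
      intro u
      rw [MonoidHom.comp_apply]
      show inclHom G {w | w ≠ x} (subHom G (lk_subset_ne G x) (gen _ u)) =
        inclHom G (lk G x) (gen _ u)
      rw [subHom_gen, inclHom_gen, inclHom_gen])

theorem amalPsi_of_true (y : IndRAAG G {w | w ≠ x}) :
    amalPsi G x (of (φ := amalPhi G x) true y) = inclHom G {w | w ≠ x} y := by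
  unfold amalPsi
  exact Monoid.PushoutI.lift_of (φ := amalPhi G x) (amalInc G x) (inclHom G (lk G x)) _ (i := true) y

theorem amalPsi_of_false (y : IndRAAG G (st G x)) :
    amalPsi G x (of (φ := amalPhi G x) false y) = inclHom G (st G x) y := by
  unfold amalPsi
  exact Monoid.PushoutI.lift_of (φ := amalPhi G x) (amalInc G x) (inclHom G (lk G x)) _ (i := false) y

theorem of_true_eq_of_false {w : V} (hw : w ∈ lk G x) (h1 : w ≠ x) :
    of (φ := amalPhi G x) true (gen _ ⟨w, h1⟩)
      = of (φ := amalPhi G x) false (gen _ ⟨w, lk_subset_st G x hw⟩) := by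
  have e1 : (amalPhi G x true) (gen _ (⟨w, hw⟩ : lk G x)) = gen _ ⟨w, h1⟩ :=
    subHom_gen (lk_subset_ne G x) ⟨w, hw⟩
  have e2 : (amalPhi G x false) (gen _ (⟨w, hw⟩ : lk G x)) =
      gen _ ⟨w, lk_subset_st G x hw⟩ :=
    subHom_gen (lk_subset_st G x) ⟨w, hw⟩
  rw [← e1, ← e2, of_apply_eq_base, of_apply_eq_base]

/-- The map from the RAAG to the amalgam. -/
noncomputable def amalTheta : RAAG G →* Monoid.PushoutI (amalPhi G x) :=
  mkHom (fun v => if h : v ≠ x then of (φ := amalPhi G x) true (gen _ ⟨v, h⟩)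
    else of (φ := amalPhi G x) false (gen _ ⟨x, Set.mem_insert _ _⟩)) (by
    intro v w hadj
    beta_reduce
    by_cases hv : v ≠ x <;> by_cases hw : w ≠ x
    · rw [dif_pos hv, dif_pos hw]
      exact (gen_commute_of_adj
        (show (G.comap (Subtype.val : ({w | w ≠ x} : Set V) → V)).Adj ⟨v, hv⟩ ⟨w, hw⟩
          from hadj)).map _
    · rw [dif_pos hv, dif_neg hw]
      have hwx : w = x := not_not.1 hw
      have hvlk : v ∈ lk G x := by rw [lk, Set.mem_setOf_eq, ← hwx]; exact hadj.symm
      rw [of_true_eq_of_false G x hvlk hv]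
      refine (gen_commute_of_adj
        (show (G.comap (Subtype.val : ↥(st G x) → V)).Adj
          ⟨v, lk_subset_st G x hvlk⟩ ⟨x, Set.mem_insert _ _⟩ from ?_)).map _
      show G.Adj v x
      rw [← hwx]; exact hadj
    · rw [dif_neg hv, dif_pos hw]
      have hvx : v = x := not_not.1 hv
      have hwlk : w ∈ lk G x := by rw [lk, Set.mem_setOf_eq, ← hvx]; exact hadj
      rw [of_true_eq_of_false G x hwlk hw]
      refine (gen_commute_of_adj
        (show (G.comap (Subtype.val : ↥(st G x) → V)).Adj
          ⟨x, Set.mem_insert _ _⟩ ⟨w, lk_subset_st G x hwlk⟩ from ?_)).map _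
      show G.Adj x w
      rw [← hvx]; exact hadj
    · exact absurd hadj.ne (by rw [not_not.1 hv, not_not.1 hw]; simp))

theorem amalTheta_gen_ne {v : V} (h : v ≠ x) :
    amalTheta G x (gen G v) = of (φ := amalPhi G x) true (gen _ ⟨v, h⟩) := by
  rw [amalTheta, mkHom_gen, dif_pos h]

theorem amalTheta_gen_eq :
    amalTheta G x (gen G x) = of (φ := amalPhi G x) false
      (gen _ ⟨x, Set.mem_insert _ _⟩) := by
  rw [amalTheta, mkHom_gen, dif_neg (by simp)]

theorem amalPsi_comp_amalTheta :
    (amalPsi G x).comp (amalTheta G x) = MonoidHom.id _ := by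
  apply raag_hom_ext
  intro v
  rw [MonoidHom.comp_apply, MonoidHom.id_apply]
  by_cases h : v ≠ x
  · rw [amalTheta_gen_ne G x h, amalPsi_of_true, inclHom_gen]
  · rw [not_not.1 h, amalTheta_gen_eq, amalPsi_of_false, inclHom_gen]

theorem amalPsi_amalTheta (g : RAAG G) : amalPsi G x (amalTheta G x g) = g := by
  have := congrArg (fun f : RAAG G →* RAAG G => f g) (amalPsi_comp_amalTheta G x)
  simpa using this

end Amalgam


/-- Servatius' Centralizer Theorem (containment): an element commuting with a
generator `v` lies in the special subgroup on the star of `v`. -/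
theorem centralizer_core : ∀ (n : ℕ) (V : Type) [Fintype V] (G : SimpleGraph V),
    Fintype.card V ≤ n → ∀ (v : V) (h : RAAG G),
    h * gen G v * h⁻¹ = gen G v → h ∈ sp G (st G v) := by
  intro n
  induction n with
  | zero =>
    intro V _ G hcard v h _
    exact absurd hcard (by have := Fintype.card_pos_iff.2 ⟨v⟩; omega)
  | succ n ih =>
    intro V _ G hcard v h hcomm
    by_cases hst : st G v = Set.univ
    · rw [hst, sp_univ]; exact Subgroup.mem_top h
    obtain ⟨x, hx⟩ : ∃ x, x ∉ st G v := by
      by_contra hc; push_neg at hc; exact hst (Set.eq_univ_of_forall hc)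
    have hvx : v ≠ x := fun hvx => hx (hvx ▸ Set.mem_insert _ _)
    have hnadj : ¬ G.Adj v x := fun hadj => hx (Set.mem_insert_iff.2 (Or.inr hadj))
    set a : IndRAAG G {w | w ≠ x} := gen _ ⟨v, hvx⟩ with ha_def
    set e : IndRAAG G {w | w ≠ x} →* Multiplicative ℤ :=
      mkHom (fun u => if u.val = v then Multiplicative.ofAdd (1 : ℤ) else 1)
        (fun _ _ _ => Commute.all _ _) with he_def
    have hephi : ∀ c : IndRAAG G (lk G x), e (amalPhi G x true c) = 1 := by
      intro c
      have hcc : e.comp (amalPhi G x true) = 1 := by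
        apply raag_hom_ext
        intro u
        show e (amalPhi G x true (gen _ u)) = 1
        show e (subHom G (lk_subset_ne G x) (gen _ u)) = 1
        rw [subHom_gen, he_def, mkHom_gen]
        have hne : (⟨u.val, lk_subset_ne G x u.2⟩ : {w : V // w ∈ {w | w ≠ x}}).val ≠ v := by
          intro hu
          apply hnadj
          have h2 := u.2
          rw [show (⟨u.val, lk_subset_ne G x u.2⟩ :
            {w : V // w ∈ {w | w ≠ x}}).val = u.val from rfl, hu] at h2
          exact (h2 : G.Adj x v).symm
        rw [if_neg hne]
      have := congrArg (fun f : IndRAAG G (lk G x) →* Multiplicative ℤ => f c) hcc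
      exact this
    have hea : e a = Multiplicative.ofAdd (1 : ℤ) := by
      rw [ha_def, he_def, mkHom_gen, if_pos rfl]
    have hnotconj : ∀ u : IndRAAG G {w | w ≠ x},
        u * a * u⁻¹ ∉ (amalPhi G x true).range := by
      rintro u ⟨c, hc⟩
      have he := congrArg e hc
      rw [map_mul, map_mul, map_inv, hephi, hea, mul_comm (e u), mul_assoc,
        mul_inv_cancel, mul_one] at he
      exact absurd he (by decide)
    have hθ : amalTheta G x h * Monoid.PushoutI.of (φ := amalPhi G x) true a *
        (amalTheta G x h)⁻¹ = Monoid.PushoutI.of (φ := amalPhi G x) true a := by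
      have hth := congrArg (amalTheta G x) hcomm
      rw [map_mul, map_mul, map_inv, amalTheta_gen_ne G x hvx] at hth
      exact hth
    have hrange := RAAGAux.mem_range_of_conj_mem (φ := amalPhi G x) (i := true)
      (a := a) (amalPhi_injective G x) hnotconj
      (amalTheta G x h) (by rw [hθ]; exact ⟨a, rfl⟩)
    obtain ⟨h₀, hh₀⟩ := hrange
    let h₁ : IndRAAG G {w | w ≠ x} := h₀
    have hh₁ : Monoid.PushoutI.of (φ := amalPhi G x) true h₁ = amalTheta G x h := hh₀
    have hh : h = inclHom G {w | w ≠ x} h₁ := by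
      rw [← amalPsi_amalTheta G x h, ← hh₁, amalPsi_of_true]
    have hgenv : gen G v = inclHom G {w | w ≠ x} a := by rw [ha_def, inclHom_gen]
    have hcomm₁ : h₁ * a * h₁⁻¹ = a := by
      apply inclHom_injective (G := G) {w | w ≠ x}
      rw [map_mul, map_mul, map_inv, ← hgenv, ← hh, hcomm, hgenv]
    have hcard₁ : Fintype.card ↥({w : V | w ≠ x}) ≤ n := by
      have hlt : Fintype.card ↥({w : V | w ≠ x}) < Fintype.card V :=
        Fintype.card_lt_of_injective_of_notMem (Subtype.val) Subtype.val_injective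
          (b := x) (by simp [Subtype.range_coe_subtype])
      omega
    have hIH := ih ↥({w : V | w ≠ x}) (G.comap Subtype.val) hcard₁ ⟨v, hvx⟩ h₁ hcomm₁
    have hmap : h ∈ Subgroup.map (inclHom G {w | w ≠ x})
        (sp _ (st (G.comap (Subtype.val : ({w : V | w ≠ x} : Set V) → V)) ⟨v, hvx⟩)) :=
      ⟨h₁, hIH, hh.symm⟩
    rw [inclHom_map_sp] at hmap
    refine sp_mono ?_ hmap
    rintro _ ⟨u, hu, rfl⟩
    rcases Set.mem_insert_iff.1 hu with rfl | hu
    · exact Set.mem_insert _ _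
    · exact Set.mem_insert_iff.2 (Or.inr hu)

end Aux

open scoped Classical

/-- The normalizer of a special subgroup `A_Δ` is `A_{st(Δ)}`,
where `st(Δ)` is spanned by `Δ` together with the vertices adjacent to every
vertex of `Δ`. -/
theorem normalizer_special_subgroup [Fintype V] (G : SimpleGraph V) (Δ : Set V) :
    Subgroup.normalizer (sp G Δ : Set (RAAG G)) = sp G (Δ ∪ {w | ∀ v ∈ Δ, G.Adj w v}) := by
  apply le_antisymm
  · -- normalizer ≤ sp of the star
    intro g hg
    rcases Set.eq_empty_or_nonempty Δ with rfl | ⟨v₀, hv₀⟩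
    · have hU : (∅ : Set V) ∪ {w | ∀ v ∈ (∅ : Set V), G.Adj w v} = Set.univ := by
        ext w; simp
      rw [hU, sp_univ]
      exact Subgroup.mem_top g
    · set S := Δ ∪ {w | ∀ v ∈ Δ, G.Adj w v} with hS
      set p := retr G S g with hp
      have hpg : ∀ v ∈ Δ, p * gen G v * p⁻¹ = g * gen G v * g⁻¹ := by
        intro v hv
        have h1 : g * gen G v * g⁻¹ ∈ sp G Δ :=
          (Subgroup.mem_normalizer_iff.1 hg _).1 (gen_mem_sp hv)
        have h2 : retr G S (g * gen G v * g⁻¹) = g * gen G v * g⁻¹ :=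
          retr_fix (sp_mono Set.subset_union_left h1)
        rw [map_mul, map_mul, map_inv, retr_gen_mem (Set.mem_union_left _ hv)] at h2
        exact h2
      set h := p⁻¹ * g with hh
      have hcomm : ∀ v ∈ Δ, h * gen G v * h⁻¹ = gen G v := by
        intro v hv
        have h4 := hpg v hv
        calc (p⁻¹ * g) * gen G v * (p⁻¹ * g)⁻¹
            = p⁻¹ * (g * gen G v * g⁻¹) * p := by group
        _ = p⁻¹ * (p * gen G v * p⁻¹) * p := by rw [h4]
        _ = gen G v := by group
      have hcent : ∀ v ∈ Δ, h ∈ sp G (st G v) := fun v hv =>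
        centralizer_core (Fintype.card V) V G le_rfl v h (hcomm v hv)
      have hfin : h ∈ sp G (⋂ v ∈ Δ.toFinset, st G v) :=
        mem_sp_biInter Δ.toFinset _ (Set.toFinset_nonempty.2 ⟨v₀, hv₀⟩)
          (fun v hv => hcent v (Set.mem_toFinset.1 hv))
      have hsub : (⋂ v ∈ Δ.toFinset, st G v) ⊆ S := by
        intro w hw
        by_cases hwΔ : w ∈ Δ
        · exact Or.inl hwΔ
        · refine Or.inr ?_
          intro v hv
          have hw' := Set.mem_iInter₂.1 hw v (Set.mem_toFinset.2 hv)
          rcases Set.mem_insert_iff.1 hw' with rfl | hadj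
          · exact absurd hv hwΔ
          · exact (hadj : G.Adj v w).symm
      have hg_eq : g = p * h := by rw [hh]; group
      rw [hg_eq]
      exact mul_mem (retr_mem G S g) (sp_mono hsub hfin)
  · -- sp of the star ≤ normalizer
    refine (Subgroup.closure_le _).2 ?_
    rintro _ ⟨w, hw, rfl⟩
    rcases hw with hw | hw
    · exact Subgroup.le_normalizer (gen_mem_sp hw)
    · have hc : ∀ y ∈ sp G Δ, gen G w * y * (gen G w)⁻¹ = y := by
        intro y hy
        induction hy using Subgroup.closure_induction with
        | mem z hz =>
          rcases hz with ⟨v, hv, rfl⟩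
          have hcw : Commute (gen G w) (gen G v) := gen_commute_of_adj (hw v hv)
          rw [hcw.eq, mul_inv_cancel_right]
        | one => simp
        | mul A B _ _ ihA ihB =>
          have hAB : gen G w * (A * B) * (gen G w)⁻¹ =
              (gen G w * A * (gen G w)⁻¹) * (gen G w * B * (gen G w)⁻¹) := by group
          rw [hAB, ihA, ihB]
        | inv A _ ihA =>
          have hA : gen G w * A⁻¹ * (gen G w)⁻¹ = (gen G w * A * (gen G w)⁻¹)⁻¹ := by group
          rw [hA, ihA]
      rw [SetLike.mem_coe, Subgroup.mem_normalizer_iff]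
      intro y
      constructor
      · intro hy
        rw [hc y hy]
        exact hy
      · intro hy
        have hz := hc _ hy
        have h5 : y = (gen G w)⁻¹ * (gen G w * y * (gen G w)⁻¹) * gen G w := by group
        have h6 : (gen G w)⁻¹ * (gen G w * y * (gen G w)⁻¹) * gen G w
            = gen G w * y * (gen G w)⁻¹ := by
          conv_lhs => rw [← hz]
          group
        rw [h5, h6]
        exact hy


end RAAGPaper
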